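/- arXiv:1904.03563 — 3 statements merged into one kernel-verified Lean document; each statement's English description precedes it below -/
import Mathlib

section
/- Let H be a symmetric n×n real matrix, g ∈ ℝⁿ, ε ∈ (0, 1), β ∈ [ε, 1), and x ∈ ℝⁿ with x > 0 componentwise. Let v ∈ ℝⁿ, v ≠ 0, satisfy vᵀ(H + 2ε·I)v ≤ ε‖v‖². Define d = −σ·min{ |vᵀHv|/‖v‖³ , β/‖X⁻¹X̄v‖∞ }·v, where σ = 1 if gᵀv ≥ 0 and σ = −1 otherwise. Then gᵀd ≤ 0, and dᵀHd/‖d‖² ≤ −‖d‖ ≤ −ε. -/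
set_option maxHeartbeats 800000


open Matrix

/-- The Euclidean norm of a vector in `Fin n → ℝ`. -/
noncomputable def euclNorm {n : ℕ} (v : Fin n → ℝ) : ℝ := Real.sqrt (∑ i, (v i)^2)

lemma euclNorm_smul {n : ℕ} (t : ℝ) (v : Fin n → ℝ) :
    euclNorm (t • v) = |t| * euclNorm v := by
  unfold euclNorm
  have h : ∑ i, ((t • v) i) ^ 2 = t^2 * ∑ i, (v i)^2 := by
    simp [Finset.mul_sum, mul_pow]
  rw [h, Real.sqrt_mul (sq_nonneg t), Real.sqrt_sq_eq_abs]

lemma euclNorm_pos {n : ℕ} {v : Fin n → ℝ} (hv : v ≠ 0) : 0 < euclNorm v := by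
  apply Real.sqrt_pos.mpr
  obtain ⟨i, hi⟩ := Function.ne_iff.mp hv
  have hi' : v i ≠ 0 := hi
  exact Finset.sum_pos' (fun j _ => sq_nonneg _) ⟨i, Finset.mem_univ i, by positivity⟩

lemma euclNorm_sq {n : ℕ} (v : Fin n → ℝ) : euclNorm v ^ 2 = ∑ i, (v i)^2 :=
  Real.sq_sqrt (Finset.sum_nonneg fun i _ => sq_nonneg _)

lemma abs_le_euclNorm {n : ℕ} (v : Fin n → ℝ) (i : Fin n) : |v i| ≤ euclNorm v := by
  rw [← Real.sqrt_sq_eq_abs]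
  exact Real.sqrt_le_sqrt (Finset.single_le_sum (fun j _ => sq_nonneg (v j)) (Finset.mem_univ i))

/-- let `H` be symmetric, `g ∈ ℝⁿ`, `ε ∈ (0,1)`, `β ∈ [ε,1)`, `x > 0`,
and `v ≠ 0` with `vᵀ(H + 2εI)v ≤ ε‖v‖²`. Define
`d = −σ min{|vᵀHv|/‖v‖³, β/‖X⁻¹X̄v‖∞} v` where `σ = 1` if `gᵀv ≥ 0`, `σ = −1` otherwise.
Then `gᵀd ≤ 0` and `dᵀHd/‖d‖² ≤ −‖d‖ ≤ −ε`. Here `‖·‖` on the vector `v` (via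
`euclNorm`) is the Euclidean norm and `‖·‖` on `Fin n → ℝ` is the max-norm. -/
theorem stmt13 {n : ℕ} (H : Matrix (Fin n) (Fin n) ℝ) (hH : H.IsSymm)
    (g x : Fin n → ℝ) (hx : ∀ i, 0 < x i)
    (ε : ℝ) (hε : ε ∈ Set.Ioo (0:ℝ) 1)
    (β : ℝ) (hβ : β ∈ Set.Ico ε 1)
    (v : Fin n → ℝ) (hv : v ≠ 0)
    (hcurv : v ⬝ᵥ ((H + (2 * ε) • (1 : Matrix (Fin n) (Fin n) ℝ)) *ᵥ v)
      ≤ ε * euclNorm v ^ 2)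
    (σ : ℝ) (hσ : σ = if 0 ≤ g ⬝ᵥ v then (1:ℝ) else -1)
    (d : Fin n → ℝ)
    (hd : d = (-σ * min (|v ⬝ᵥ (H *ᵥ v)| / euclNorm v ^ 3)
      (β / ‖(fun i => (min (x i) 1 / x i) * v i : Fin n → ℝ)‖)) • v) :
    g ⬝ᵥ d ≤ 0 ∧
      d ⬝ᵥ (H *ᵥ d) / euclNorm d ^ 2 ≤ -euclNorm d ∧
      -euclNorm d ≤ -ε := by
  obtain ⟨hε0, hε1⟩ := hε
  obtain ⟨hβε, hβ1⟩ := hβ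
  set N := euclNorm v with hN
  have hNpos : 0 < N := euclNorm_pos hv
  have hNsq : N ^ 2 = v ⬝ᵥ v := by
    rw [hN, euclNorm_sq]; simp [dotProduct, sq]
  -- curvature rewrite
  have hvv : v ⬝ᵥ ((H + (2 * ε) • (1 : Matrix (Fin n) (Fin n) ℝ)) *ᵥ v)
      = v ⬝ᵥ (H *ᵥ v) + (2 * ε) * (v ⬝ᵥ v) := by
    rw [Matrix.add_mulVec, dotProduct_add, Matrix.smul_mulVec, Matrix.one_mulVec,
      dotProduct_smul]
    simp [smul_eq_mul]
  have hvHv : v ⬝ᵥ (H *ᵥ v) ≤ -ε * N ^ 2 := by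
    have := hcurv
    rw [hvv, ← hNsq] at this
    nlinarith
  have hvHv_neg : v ⬝ᵥ (H *ᵥ v) < 0 := by
    have h0 : 0 < ε * N ^ 2 := by positivity
    linarith
  have habs : |v ⬝ᵥ (H *ᵥ v)| = -(v ⬝ᵥ (H *ᵥ v)) := abs_of_neg hvHv_neg
  set w : Fin n → ℝ := (fun i => (min (x i) 1 / x i) * v i) with hw
  have hwne : w ≠ 0 := by
    obtain ⟨i, hi⟩ := Function.ne_iff.mp hv
    have hi' : v i ≠ 0 := hi
    apply Function.ne_iff.mpr ⟨i, ?_⟩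
    have hm : 0 < min (x i) 1 := lt_min (hx i) one_pos
    have h0 : min (x i) 1 / x i ≠ 0 := ne_of_gt (div_pos hm (hx i))
    show (min (x i) 1 / x i) * v i ≠ 0
    exact mul_ne_zero h0 hi'
  have hwpos : 0 < ‖w‖ := norm_pos_iff.mpr hwne
  have hwleN : ‖w‖ ≤ N := by
    apply pi_norm_le_iff_of_nonneg hNpos.le |>.mpr
    intro i
    have h1 : |w i| = (min (x i) 1 / x i) * |v i| := by
      rw [hw]
      have : 0 ≤ min (x i) 1 / x i := le_of_lt (div_pos (lt_min (hx i) one_pos) (hx i))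
      simp [abs_mul, abs_of_nonneg this]
    have h2 : min (x i) 1 / x i ≤ 1 := div_le_one_of_le₀ (min_le_left _ _) (hx i).le
    calc ‖w i‖ = |w i| := rfl
      _ ≤ 1 * |v i| := by rw [h1]; exact mul_le_mul_of_nonneg_right h2 (abs_nonneg _)
      _ ≤ N := by rw [one_mul]; exact abs_le_euclNorm v i
  set c1 := |v ⬝ᵥ (H *ᵥ v)| / euclNorm v ^ 3 with hc1
  set c2 := β / ‖w‖ with hc2
  set m := min c1 c2 with hm
  have hc1pos : 0 < c1 := by
    rw [hc1]
    exact div_pos (abs_pos.mpr hvHv_neg.ne) (pow_pos hNpos 3)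
  have hc2pos : 0 < c2 := div_pos (lt_of_lt_of_le hε0 hβε) hwpos
  have hmpos : 0 < m := lt_min hc1pos hc2pos
  have hσabs : |σ| = 1 := by rw [hσ]; split <;> simp
  have hσsq : σ ^ 2 = 1 := by rw [← sq_abs, hσabs]; norm_num
  have hnormd : euclNorm d = m * N := by
    rw [hd, euclNorm_smul, abs_mul, abs_neg, hσabs, one_mul, abs_of_pos hmpos]
  have hσgv : 0 ≤ σ * (g ⬝ᵥ v) := by
    rw [hσ]
    by_cases hgv : 0 ≤ g ⬝ᵥ v
    · rw [if_pos hgv]; simpa using hgv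
    · rw [if_neg hgv]; nlinarith [lt_of_not_ge hgv]
  refine ⟨?_, ?_, ?_⟩
  · rw [hd, dotProduct_smul]
    have : (-σ * m) • (g ⬝ᵥ v) = -(m * (σ * (g ⬝ᵥ v))) := by
      simp [smul_eq_mul]; ring
    rw [this]
    simp only [neg_nonpos]
    exact mul_nonneg hmpos.le hσgv
  · -- second part
    have hdHd : d ⬝ᵥ (H *ᵥ d) = (σ * m)^2 * (v ⬝ᵥ (H *ᵥ v)) := by
      rw [hd, Matrix.mulVec_smul, dotProduct_smul, smul_dotProduct]
      simp [smul_eq_mul]; ring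
    have hdsq : euclNorm d ^ 2 = m ^ 2 * N ^ 2 := by rw [hnormd]; ring
    rw [hdHd, hdsq, hnormd]
    have h1 : (σ * m)^2 = m^2 := by rw [mul_pow, hσsq, one_mul]
    rw [h1]
    have hmn : m ≤ c1 := min_le_left _ _
    have hkey : m * N ≤ |v ⬝ᵥ (H *ᵥ v)| / N ^ 2 := by
      have : c1 * N = |v ⬝ᵥ (H *ᵥ v)| / N ^ 2 := by
        rw [hc1, ← hN]; field_simp
      rw [← this]
      exact mul_le_mul_of_nonneg_right hmn hNpos.le
    have hne : m ^ 2 * N ^ 2 ≠ 0 := by positivity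
    rw [div_le_iff₀ (by positivity : (0:ℝ) < m^2 * N^2)]
    rw [habs, le_div_iff₀ (by positivity : (0:ℝ) < N^2)] at hkey
    nlinarith [mul_le_mul_of_nonneg_left hkey (sq_nonneg m)]
  · rw [hnormd, neg_le_neg_iff]
    have h1 : ε ≤ c1 * N := by
      have : c1 * N = |v ⬝ᵥ (H *ᵥ v)| / N ^ 2 := by
        rw [hc1, ← hN]; field_simp
      rw [this, le_div_iff₀ (by positivity : (0:ℝ) < N^2), habs]
      nlinarith
    have h2 : ε ≤ c2 * N := by
      have : β ≤ c2 * N := by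
        rw [hc2, div_mul_eq_mul_div, le_div_iff₀ hwpos]
        exact mul_le_mul_of_nonneg_left hwleN (le_trans hε0.le hβε)
      linarith
    rcases le_total c1 c2 with h | h
    · rw [hm, min_eq_left h]; exact h1
    · rw [hm, min_eq_right h]; exact h2
end

section
/- Let H be a symmetric n×n real matrix with operator norm ‖H‖ ≤ M for some M ≥ 0, let ε > 0 and ζ ∈ (0, 1), and set κ = (M + 2ε)/ε and ẑ = ζ/(3κ). Let g, d̂ ∈ ℝⁿ and define r̂ = (H + 2ε·I)d̂ + g. If ‖r̂‖ ≤ ẑ‖g‖, then ‖r̂‖ ≤ (ζε/2)‖d̂‖. -/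
open Matrix

/-- The operator norm (induced by the Euclidean norm) of a matrix. -/
noncomputable def opNorm {n : ℕ} (A : Matrix (Fin n) (Fin n) ℝ) : ℝ :=
  ‖Matrix.toEuclideanCLM (𝕜 := ℝ) A‖

lemma euclNorm_eq {n : ℕ} (v : Fin n → ℝ) :
    euclNorm v = ‖(WithLp.equiv 2 (Fin n → ℝ)).symm v‖ := by
  rw [EuclideanSpace.norm_eq, euclNorm]
  congr 1
  refine Finset.sum_congr rfl fun i _ => ?_
  rw [Real.norm_eq_abs, sq_abs]
  rfl

lemma euclNorm_mulVec_le {n : ℕ} (A : Matrix (Fin n) (Fin n) ℝ) (v : Fin n → ℝ) :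
    euclNorm (A *ᵥ v) ≤ opNorm A * euclNorm v := by
  rw [euclNorm_eq, euclNorm_eq, opNorm]
  have : (WithLp.equiv 2 (Fin n → ℝ)).symm (A *ᵥ v)
      = Matrix.toEuclideanCLM (𝕜 := ℝ) A ((WithLp.equiv 2 (Fin n → ℝ)).symm v) := by
    rw [WithLp.equiv_symm_apply]
    rfl
  rw [this]
  exact (Matrix.toEuclideanCLM (𝕜 := ℝ) A).le_opNorm _

lemma euclNorm_sub_le {n : ℕ} (u v : Fin n → ℝ) :
    euclNorm (u - v) ≤ euclNorm u + euclNorm v := by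
  simp only [euclNorm_eq, map_sub]
  exact norm_sub_le _ _

lemma euclNorm_nonneg {n : ℕ} (v : Fin n → ℝ) : 0 ≤ euclNorm v := Real.sqrt_nonneg _

lemma opNorm_smul_one_le {n : ℕ} (c : ℝ) :
    opNorm ((c : ℝ) • (1 : Matrix (Fin n) (Fin n) ℝ)) ≤ |c| := by
  rw [opNorm, _root_.map_smul, _root_.map_one]
  calc ‖c • (1 : EuclideanSpace ℝ (Fin n) →L[ℝ] EuclideanSpace ℝ (Fin n))‖
      ≤ ‖c‖ * ‖(1 : EuclideanSpace ℝ (Fin n) →L[ℝ] EuclideanSpace ℝ (Fin n))‖ :=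
        ContinuousLinearMap.opNorm_smul_le _ _
    _ ≤ |c| * 1 := by
        rw [Real.norm_eq_abs]
        exact mul_le_mul_of_nonneg_left ContinuousLinearMap.norm_id_le (abs_nonneg c)
    _ = |c| := mul_one _

/-- let `H` be symmetric with operator norm `‖H‖ ≤ M`, `M ≥ 0`, `ε > 0`,
`ζ ∈ (0,1)`, `κ = (M + 2ε)/ε`, `ẑ = ζ/(3κ)`, and `r̂ = (H + 2εI)d̂ + g`. If
`‖r̂‖ ≤ ẑ‖g‖` then `‖r̂‖ ≤ (ζε/2)‖d̂‖` (Euclidean norms). -/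
theorem stmt15 {n : ℕ} (H : Matrix (Fin n) (Fin n) ℝ) (hH : H.IsSymm)
    (M : ℝ) (hM : 0 ≤ M) (hHM : opNorm H ≤ M)
    (ε : ℝ) (hε : 0 < ε) (ζ : ℝ) (hζ : ζ ∈ Set.Ioo (0:ℝ) 1)
    (g dhat rhat : Fin n → ℝ)
    (hrhat : rhat = (H + (2 * ε) • (1 : Matrix (Fin n) (Fin n) ℝ)) *ᵥ dhat + g)
    (h : euclNorm rhat ≤ (ζ / (3 * ((M + 2 * ε) / ε))) * euclNorm g) :
    euclNorm rhat ≤ (ζ * ε / 2) * euclNorm dhat := by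
  obtain ⟨hζ0, hζ1⟩ := hζ
  set A := H + (2 * ε) • (1 : Matrix (Fin n) (Fin n) ℝ) with hA
  have hg : g = rhat - A *ᵥ dhat := by rw [hrhat]; abel
  have hopA : opNorm A ≤ M + 2 * ε := by
    rw [opNorm, hA, map_add]
    refine (norm_add_le _ _).trans ?_
    have h1 : ‖Matrix.toEuclideanCLM (𝕜 := ℝ) H‖ ≤ M := hHM
    have h2 := opNorm_smul_one_le (n := n) (2 * ε)
    rw [opNorm] at h2
    have : |2 * ε| = 2 * ε := abs_of_pos (by linarith)
    linarith [this ▸ h2]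
  have hAd : euclNorm (A *ᵥ dhat) ≤ (M + 2 * ε) * euclNorm dhat :=
    (euclNorm_mulVec_le A dhat).trans
      (mul_le_mul_of_nonneg_right hopA (euclNorm_nonneg _))
  have hgle : euclNorm g ≤ euclNorm rhat + (M + 2 * ε) * euclNorm dhat := by
    calc euclNorm g = euclNorm (rhat - A *ᵥ dhat) := by rw [hg]
      _ ≤ euclNorm rhat + euclNorm (A *ᵥ dhat) := euclNorm_sub_le _ _
      _ ≤ euclNorm rhat + (M + 2 * ε) * euclNorm dhat := by linarith
  -- set z := ζ / (3 * ((M + 2ε)/ε))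
  set κ := (M + 2 * ε) / ε with hκ
  have hκ2 : 2 ≤ κ := by
    rw [hκ, le_div_iff₀ hε]; linarith
  have hκpos : 0 < κ := by linarith
  set z := ζ / (3 * κ) with hz
  have hzpos : 0 < z := div_pos hζ0 (by linarith)
  have hzlt : z < 1/6 := by
    rw [hz, div_lt_iff₀ (by linarith)]
    nlinarith
  have hRg : euclNorm rhat ≤ z * euclNorm g := h
  have hRnn := euclNorm_nonneg rhat
  have hGnn := euclNorm_nonneg g
  have hDnn := euclNorm_nonneg dhat
  -- (1 - z) * ‖g‖ ≤ (M+2ε) * ‖d‖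
  have key : (1 - z) * euclNorm g ≤ (M + 2 * ε) * euclNorm dhat := by nlinarith
  -- ‖r‖ ≤ z ‖g‖ ≤ z/(1-z) * (M+2ε) ‖d‖
  have hMε : M + 2 * ε = κ * ε := by rw [hκ, div_mul_cancel₀ _ hε.ne']
  -- ‖r‖ ≤ z * ‖g‖, (1-z)‖g‖ ≤ κ ε ‖d‖, 1 - z ≥ 5/6
  -- so ‖r‖ ≤ z * κ ε ‖d‖ / (1-z) = ζ ε ‖d‖ / (3(1-z)) ≤ ζ ε /2 ‖d‖
  have hzκ : z * κ = ζ / 3 := by rw [hz]; field_simp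
  nlinarith [mul_le_mul_of_nonneg_left key (le_of_lt hzpos), hMε ▸ key,
    mul_nonneg hGnn hDnn, mul_pos hε hζ0, mul_nonneg hDnn (le_of_lt hε)]
end

section
/- Let ω > 0, let k ≥ 0, and let x⁰, x¹, …, x^{k+1} be vectors in ℝⁿ with xʲ > 0 componentwise for all j = 0,…,k+1 and ‖x⁰‖∞ ≤ ω. Suppose the vectors are generated by updates x^{j+1} = xʲ + αⱼ·X̄ⱼdʲ for j = 0,…,k, where αⱼ > 0, dʲ ∈ ℝⁿ, and X̄ⱼ = diag(min(xʲ₁,1),…,min(xʲₙ,1)). Then Σᵢ(−log x_i^{k+1} + log x_i⁰) ≥ −n·(log ω − minᵢ log x_i⁰) − (√n/ω)·Σ_{j=0}^{k} αⱼ‖dʲ‖, where ‖·‖ denotes the Euclidean norm. -/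
open Finset

lemma sum_abs_le_sqrt_mul_euclNorm {n : ℕ} (v : Fin n → ℝ) :
    ∑ i, |v i| ≤ Real.sqrt n * euclNorm v := by
  have h1 : (∑ i, |v i|) ^ 2 ≤ (n : ℝ) * ∑ i, (v i) ^ 2 := by
    have := sq_sum_le_card_mul_sum_sq (s := Finset.univ) (f := fun i => |v i|)
    simpa [sq_abs] using this
  have h2 : ∑ i, |v i| = Real.sqrt ((∑ i, |v i|) ^ 2) := by
    rw [Real.sqrt_sq (Finset.sum_nonneg fun i _ => abs_nonneg _)]
  rw [h2, euclNorm, ← Real.sqrt_mul (by positivity)]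
  exact Real.sqrt_le_sqrt h1

/-- let `ω > 0`, `k ≥ 0`, and let `x⁰, …, x^{k+1}` be positive vectors with
`‖x⁰‖∞ ≤ ω`, generated by `x^{j+1} = xʲ + αⱼ X̄ⱼ dʲ` with `αⱼ > 0`. Then
`Σᵢ(−log x_i^{k+1} + log x_i⁰) ≥ −n(log ω − minᵢ log x_i⁰) − (√n/ω) Σ_{j≤k} αⱼ‖dʲ‖`,
where `‖dʲ‖` is the Euclidean norm, `‖x⁰‖∞` the max-norm (the norm on `Fin n → ℝ`),
and `minᵢ log x_i⁰` is expressed as `⨅ i, log x_i⁰`. -/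
theorem stmt17 {n : ℕ} (hn : 0 < n) (ω : ℝ) (hω : 0 < ω) (k : ℕ)
    (xs : ℕ → Fin n → ℝ) (αs : ℕ → ℝ) (ds : ℕ → Fin n → ℝ)
    (hpos : ∀ j ≤ k + 1, ∀ i, 0 < xs j i)
    (hx0 : ‖xs 0‖ ≤ ω)
    (hα : ∀ j ≤ k, 0 < αs j)
    (hupd : ∀ j ≤ k, xs (j+1) = xs j + αs j • (fun i => min (xs j i) 1 * ds j i : Fin n → ℝ)) :
    ∑ i, (-Real.log (xs (k+1) i) + Real.log (xs 0 i)) ≥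
      -(n : ℝ) * (Real.log ω - ⨅ i, Real.log (xs 0 i))
      - (Real.sqrt n / ω) * ∑ j ∈ Finset.range (k+1), αs j * euclNorm (ds j) := by
  have hx0i : ∀ i, xs 0 i ≤ ω := fun i => by
    have h := norm_le_pi_norm (xs 0) i
    have : |xs 0 i| ≤ ω := le_trans (by simpa using h) hx0
    exact (le_abs_self _).trans (le_of_eq rfl) |>.trans this
  -- componentwise growth bound
  have hgrow : ∀ m, m ≤ k + 1 → ∀ i,
      xs m i ≤ xs 0 i + ∑ j ∈ Finset.range m, αs j * |ds j i| := by
    intro m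
    induction m with
    | zero => intro _ i; simp
    | succ m ih =>
      intro hm i
      have hmk : m ≤ k := Nat.lt_succ_iff.mp hm
      have hstep : xs (m+1) i ≤ xs m i + αs m * |ds m i| := by
        have := hupd m hmk
        have hxi := hpos m (le_trans hmk (Nat.le_succ k)) i
        have hmin : min (xs m i) 1 * ds m i ≤ |ds m i| := by
          have h0 : 0 ≤ min (xs m i) 1 := le_min hxi.le zero_le_one
          calc min (xs m i) 1 * ds m i ≤ min (xs m i) 1 * |ds m i| :=
                mul_le_mul_of_nonneg_left (le_abs_self _) h0
            _ ≤ 1 * |ds m i| := mul_le_mul_of_nonneg_right (min_le_right _ _) (abs_nonneg _)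
            _ = |ds m i| := one_mul _
        have : xs (m+1) i = xs m i + αs m * (min (xs m i) 1 * ds m i) := by
          rw [this]; simp [Pi.add_apply]
        rw [this]
        have := mul_le_mul_of_nonneg_left hmin (hα m hmk).le
        linarith
      have := ih (le_trans (Nat.le_succ m) hm) i
      rw [Finset.sum_range_succ]
      linarith
  set m0 : ℝ := ⨅ i, Real.log (xs 0 i) with hm0
  have hbdd : BddBelow (Set.range fun i => Real.log (xs 0 i)) := Set.Finite.bddBelow (Set.finite_range _)
  have hne : Nonempty (Fin n) := ⟨⟨0, hn⟩⟩
  have hinf_le : ∀ i, m0 ≤ Real.log (xs 0 i) := fun i => ciInf_le hbdd i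
  -- termwise bound
  have hterm : ∀ i : Fin n,
      -Real.log (xs (k+1) i) + Real.log (xs 0 i) ≥
        -Real.log ω + 1 - (xs 0 i + ∑ j ∈ Finset.range (k+1), αs j * |ds j i|) / ω + m0 := by
    intro i
    have hx := hpos (k+1) le_rfl i
    have hlog : Real.log (xs (k+1) i) ≤ Real.log ω + (xs (k+1) i) / ω - 1 := by
      have h := Real.log_le_sub_one_of_pos (x := xs (k+1) i / ω) (by positivity)
      have : Real.log (xs (k+1) i / ω) = Real.log (xs (k+1) i) - Real.log ω :=
        Real.log_div hx.ne' hω.ne'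
      linarith
    have hS : xs (k+1) i ≤ xs 0 i + ∑ j ∈ Finset.range (k+1), αs j * |ds j i| :=
      hgrow (k+1) le_rfl i
    have hdiv : xs (k+1) i / ω ≤ (xs 0 i + ∑ j ∈ Finset.range (k+1), αs j * |ds j i|) / ω :=
      by gcongr
    have := hinf_le i
    linarith
  have hsum := Finset.sum_le_sum (fun i (_ : i ∈ Finset.univ) => hterm i)
  -- evaluate the lower-bound sum
  have hcard : (Finset.univ : Finset (Fin n)).card = n := Finset.card_fin n
  have hsum0 : ∑ i, xs 0 i ≤ (n : ℝ) * ω := by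
    calc ∑ i, xs 0 i ≤ ∑ _i : Fin n, ω := Finset.sum_le_sum fun i _ => hx0i i
      _ = (n : ℝ) * ω := by simp [mul_comm]
  have hsumS : ∑ i, ∑ j ∈ Finset.range (k+1), αs j * |ds j i| ≤
      Real.sqrt n * ∑ j ∈ Finset.range (k+1), αs j * euclNorm (ds j) := by
    rw [Finset.sum_comm, Finset.mul_sum]
    refine Finset.sum_le_sum fun j hj => ?_
    have hαj := (hα j (Nat.lt_succ_iff.mp (Finset.mem_range.mp hj))).le
    rw [← Finset.mul_sum]
    calc αs j * ∑ i, |ds j i| ≤ αs j * (Real.sqrt n * euclNorm (ds j)) :=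
          mul_le_mul_of_nonneg_left (sum_abs_le_sqrt_mul_euclNorm _) hαj
      _ = Real.sqrt n * (αs j * euclNorm (ds j)) := by ring
  -- combine
  have hLHS : ∑ i, (-Real.log ω + 1 - (xs 0 i + ∑ j ∈ Finset.range (k+1), αs j * |ds j i|) / ω + m0)
      ≥ -(n : ℝ) * (Real.log ω - m0)
        - (Real.sqrt n / ω) * ∑ j ∈ Finset.range (k+1), αs j * euclNorm (ds j) := by
    have hexp : ∑ i, (-Real.log ω + 1 - (xs 0 i + ∑ j ∈ Finset.range (k+1), αs j * |ds j i|) / ω + m0)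
        = (n : ℝ) * (-Real.log ω + 1 + m0) - (∑ i, xs 0 i) / ω
          - (∑ i, ∑ j ∈ Finset.range (k+1), αs j * |ds j i|) / ω := by
      rw [Finset.sum_add_distrib, Finset.sum_sub_distrib]
      simp only [Finset.sum_const, hcard, nsmul_eq_mul, ← Finset.sum_div, Finset.sum_add_distrib]
      ring
    rw [hexp]
    have h1 : (∑ i, xs 0 i) / ω ≤ (n : ℝ) := by
      rw [div_le_iff₀ hω]; exact hsum0
    have h2 : (∑ i, ∑ j ∈ Finset.range (k+1), αs j * |ds j i|) / ω ≤
        (Real.sqrt n / ω) * ∑ j ∈ Finset.range (k+1), αs j * euclNorm (ds j) := by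
      rw [div_mul_eq_mul_div]
      gcongr
    linarith
  calc ∑ i, (-Real.log (xs (k+1) i) + Real.log (xs 0 i))
      ≥ ∑ i, (-Real.log ω + 1 - (xs 0 i + ∑ j ∈ Finset.range (k+1), αs j * |ds j i|) / ω + m0) := hsum
    _ ≥ _ := hLHS
end
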